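/- Let Y be a random variable with continuous distribution (P(Y = y) = 0 for all y) and P(Y ≤ q) = α ∈ (0,1) where q = Q_α(Y), and similarly for X. If X ≤ Y almost surely, then E[X | X ≤ Q_α(X)] ≤ E[Y | Y ≤ Q_α(Y)]. -/

import Mathlib

open MeasureTheory

/-- Conditional expectation of a random variable given an event. -/
noncomputable def condExpEvent {Ω : Type*} [MeasurableSpace Ω] (μ : Measure Ω)
    (Y : Ω → ℝ) (A : Set Ω) : ℝ :=
  (∫ ω in A, Y ω ∂μ) / (μ A).toReal

/-- The α-quantile `Q_α(X) = inf {x | P(X ≤ x) ≥ α}`. -/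
noncomputable def quantile {Ω : Type*} [MeasurableSpace Ω] (μ : Measure Ω)
    (α : ℝ) (X : Ω → ℝ) : ℝ :=
  sInf {x : ℝ | α ≤ (μ {ω | X ω ≤ x}).toReal}

set_option maxHeartbeats 1000000 in
/-- If `X` and `Y` have continuous distributions with `P(X ≤ Q_α(X)) = P(Y ≤ Q_α(Y)) = α` and
`X ≤ Y` a.s., then `E[X | X ≤ Q_α(X)] ≤ E[Y | Y ≤ Q_α(Y)]`. -/
theorem stmt18 {Ω : Type*} [MeasurableSpace Ω] (μ : Measure Ω) [IsProbabilityMeasure μ]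
    (α : ℝ) (hα : α ∈ Set.Ioo (0 : ℝ) 1)
    (X Y : Ω → ℝ) (hXm : Measurable X) (hYm : Measurable Y)
    (hXint : Integrable X μ) (hYint : Integrable Y μ)
    (hXcont : ∀ x : ℝ, μ {ω | X ω = x} = 0) (hYcont : ∀ y : ℝ, μ {ω | Y ω = y} = 0)
    (hqX : (μ {ω | X ω ≤ quantile μ α X}).toReal = α)
    (hqY : (μ {ω | Y ω ≤ quantile μ α Y}).toReal = α)
    (hle : ∀ᵐ ω ∂μ, X ω ≤ Y ω) :
    condExpEvent μ X {ω | X ω ≤ quantile μ α X}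
      ≤ condExpEvent μ Y {ω | Y ω ≤ quantile μ α Y} := by
  set qX := quantile μ α X with hqXdef
  set qY := quantile μ α Y with hqYdef
  set A : Set Ω := {ω | X ω ≤ qX} with hAdef
  set B : Set Ω := {ω | Y ω ≤ qY} with hBdef
  have hAmeas : MeasurableSet A := hXm measurableSet_Iic
  have hBmeas : MeasurableSet B := hYm measurableSet_Iic
  have hABmeas : MeasurableSet (A ∩ B) := hAmeas.inter hBmeas
  have hADmeas : MeasurableSet (A \ B) := hAmeas.diff hBmeas
  have hBDmeas : MeasurableSet (B \ A) := hBmeas.diff hAmeas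
  -- measures of the symmetric difference pieces agree
  have hmA : μ (A ∩ B) + μ (A \ B) = μ A := measure_inter_add_diff A hBmeas
  have hmB : μ (B ∩ A) + μ (B \ A) = μ B := measure_inter_add_diff B hAmeas
  have hfin : ∀ s : Set Ω, μ s ≠ ⊤ := fun s => measure_ne_top μ s
  have hμAB : (μ (A \ B)).toReal = (μ (B \ A)).toReal := by
    have h1 : (μ (A ∩ B)).toReal + (μ (A \ B)).toReal = α := by
      rw [← ENNReal.toReal_add (hfin _) (hfin _), hmA]; exact hqX
    have h2 : (μ (A ∩ B)).toReal + (μ (B \ A)).toReal = α := by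
      rw [← ENNReal.toReal_add (hfin _) (hfin _), Set.inter_comm A B, hmB]; exact hqY
    linarith
  -- integrability
  have hXA : IntegrableOn X (A ∩ B) μ := hXint.integrableOn
  have hXAd : IntegrableOn X (A \ B) μ := hXint.integrableOn
  have hYA : IntegrableOn Y (A ∩ B) μ := hYint.integrableOn
  have hYBd : IntegrableOn Y (B \ A) μ := hYint.integrableOn
  -- split the integrals
  have hdisjA : Disjoint (A ∩ B) (A \ B) :=
    Set.disjoint_sdiff_right.mono_left Set.inter_subset_right
  have hdisjB : Disjoint (A ∩ B) (B \ A) :=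
    Set.disjoint_sdiff_right.mono_left Set.inter_subset_left
  have hsplitA : ∫ ω in A, X ω ∂μ = (∫ ω in A ∩ B, X ω ∂μ) + ∫ ω in A \ B, X ω ∂μ := by
    rw [← setIntegral_union hdisjA hADmeas hXA hXAd, Set.inter_union_diff]
  have hsplitB : ∫ ω in B, Y ω ∂μ = (∫ ω in A ∩ B, Y ω ∂μ) + ∫ ω in B \ A, Y ω ∂μ := by
    rw [← setIntegral_union hdisjB hBDmeas hYA hYBd, Set.inter_comm A B, Set.inter_union_diff]
  -- compare on the common part
  have h1 : ∫ ω in A ∩ B, X ω ∂μ ≤ ∫ ω in A ∩ B, Y ω ∂μ :=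
    setIntegral_mono_ae_restrict hXA hYA (ae_restrict_of_ae hle)
  -- on A \ B, X ≤ qX
  have h2 : ∫ ω in A \ B, X ω ∂μ ≤ qX * (μ (A \ B)).toReal := by
    have := setIntegral_mono_on hXAd (integrableOn_const (hfin _))
      hADmeas (fun ω hω => (hω.1 : X ω ≤ qX))
    simpa [setIntegral_const, mul_comm, Measure.real] using this
  -- on B \ A, qX ≤ Y
  have h3 : qX * (μ (B \ A)).toReal ≤ ∫ ω in B \ A, Y ω ∂μ := by
    have hae : (fun _ : Ω => qX) ≤ᵐ[μ.restrict (B \ A)] Y := by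
      filter_upwards [ae_restrict_of_ae hle, ae_restrict_mem hBDmeas] with ω h1 h2
      have : ¬ X ω ≤ qX := h2.2
      linarith [not_le.mp this]
    have := setIntegral_mono_ae_restrict (integrableOn_const (hfin _))
      hYBd hae
    simpa [setIntegral_const, mul_comm, Measure.real] using this
  have hnum : ∫ ω in A, X ω ∂μ ≤ ∫ ω in B, Y ω ∂μ := by
    rw [hsplitA, hsplitB]
    have := hμAB ▸ h2
    linarith
  unfold condExpEvent
  rw [hqX, hqY]
  gcongr
  exact hα.1.le
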